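/- Let b > 0, 0 < ω < 1/2, and φ ∈ ℝ, and consider the exponentially modulated sinusoid s_n = b^n cos(2πωn + φ) for n ≥ 0. Then for every window length L ≥ 2 the L-trajectory space of s has dimension exactly 2; that is, both damped and undamped sinusoids with frequency strictly between 0 and 1/2 have rank 2. -/

import Mathlib

private lemma aux_cos (b θ φ C S : ℝ) (hb : b ≠ 0) (hs : Real.sin θ ≠ 0) :
    C = (Real.sin (θ + φ) / Real.sin θ) * (1 * Real.cos (θ * 0 + φ) * C - 1 * Real.sin (θ * 0 + φ) * S)
      + (-(Real.sin φ / (b * Real.sin θ))) * (b * Real.cos (θ * 1 + φ) * C - b * Real.sin (θ * 1 + φ) * S) := by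
  rw [mul_zero, zero_add, mul_one, Real.sin_add, Real.cos_add]
  field_simp
  linear_combination (-(C * Real.sin θ)) * Real.sin_sq_add_cos_sq φ

private lemma aux_sin (b θ φ C S : ℝ) (hb : b ≠ 0) (hs : Real.sin θ ≠ 0) :
    S = (Real.cos (θ + φ) / Real.sin θ) * (1 * Real.cos (θ * 0 + φ) * C - 1 * Real.sin (θ * 0 + φ) * S)
      + (-(Real.cos φ / (b * Real.sin θ))) * (b * Real.cos (θ * 1 + φ) * C - b * Real.sin (θ * 1 + φ) * S) := by
  rw [mul_zero, zero_add, mul_one, Real.sin_add, Real.cos_add]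
  field_simp
  linear_combination (-(S * Real.sin θ)) * Real.sin_sq_add_cos_sq φ

/-- For `b > 0`, `0 < ω < 1/2` and any phase `φ`, the exponentially
modulated sinusoid `s n = b^n * cos (2πωn + φ)` has, for every window length
`L ≥ 2`, an `L`-trajectory space of dimension exactly `2`: both damped and undamped
sinusoids have rank `2`. -/
theorem damped_sinusoid_rank_two
    (b : ℝ) (hb : 0 < b) (ω : ℝ) (hω0 : 0 < ω) (hω : ω < 1 / 2) (φ : ℝ)
    (s : ℕ → ℝ) (hs : ∀ n : ℕ, s n = b ^ n * Real.cos (2 * Real.pi * ω * n + φ))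
    (L : ℕ) (hL : 2 ≤ L) :
    Module.finrank ℝ
      ↥(Submodule.span ℝ (Set.range fun i : ℕ => fun l : Fin L => s (i + (l : ℕ)))) = 2 := by
  set θ := 2 * Real.pi * ω with hθdef
  have hπ := Real.pi_pos
  have hθ0 : 0 < θ := by positivity
  have hθπ : θ < Real.pi := by rw [hθdef]; nlinarith
  have hsinθ : 0 < Real.sin θ := Real.sin_pos_of_pos_of_lt_pi hθ0 hθπ
  have hbne : b ≠ 0 := ne_of_gt hb
  have hsne : Real.sin θ ≠ 0 := ne_of_gt hsinθ
  set u : Fin L → ℝ := fun l => b ^ (l : ℕ) * Real.cos (θ * l) with hu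
  set v : Fin L → ℝ := fun l => b ^ (l : ℕ) * Real.sin (θ * l) with hv
  have key : ∀ i l : ℕ, s (i + l) = b ^ i * Real.cos (θ * i + φ) * (b ^ l * Real.cos (θ * l))
      - b ^ i * Real.sin (θ * i + φ) * (b ^ l * Real.sin (θ * l)) := by
    intro i l
    rw [hs]
    have h1 : θ * ((i : ℝ) + (l : ℝ)) + φ = (θ * i + φ) + θ * l := by ring
    push_cast
    rw [h1, Real.cos_add, pow_add]
    ring
  have hX : ∀ i : ℕ, (fun l : Fin L => s (i + (l : ℕ)))
      = (b ^ i * Real.cos (θ * i + φ)) • u + (-(b ^ i * Real.sin (θ * i + φ))) • v := by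
    intro i; funext l
    simp only [Pi.add_apply, Pi.smul_apply, smul_eq_mul, hu, hv, key i l]
    ring
  have hl0 : (0 : ℕ) < L := by omega
  have hl1 : (1 : ℕ) < L := by omega
  have hueq : u = (Real.sin (θ + φ) / Real.sin θ) • (fun l : Fin L => s (0 + (l : ℕ)))
      + (-(Real.sin φ / (b * Real.sin θ))) • (fun l : Fin L => s (1 + (l : ℕ))) := by
    funext l
    simp only [Pi.add_apply, Pi.smul_apply, smul_eq_mul, key 0 l, key 1 l, hu]
    push_cast
    rw [pow_zero, pow_one]
    exact aux_cos b θ φ _ _ hbne hsne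
  have hveq : v = (Real.cos (θ + φ) / Real.sin θ) • (fun l : Fin L => s (0 + (l : ℕ)))
      + (-(Real.cos φ / (b * Real.sin θ))) • (fun l : Fin L => s (1 + (l : ℕ))) := by
    funext l
    simp only [Pi.add_apply, Pi.smul_apply, smul_eq_mul, key 0 l, key 1 l, hv]
    push_cast
    rw [pow_zero, pow_one]
    exact aux_sin b θ φ _ _ hbne hsne
  have hspan : Submodule.span ℝ (Set.range fun i : ℕ => fun l : Fin L => s (i + (l : ℕ)))
      = Submodule.span ℝ {u, v} := by
    apply le_antisymm
    · rw [Submodule.span_le]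
      rintro _ ⟨i, rfl⟩
      have : (fun l : Fin L => s (i + (l : ℕ))) ∈ Submodule.span ℝ ({u, v} : Set (Fin L → ℝ)) := by
        rw [hX i]
        exact Submodule.add_mem _
          (Submodule.smul_mem _ _ (Submodule.subset_span (by simp)))
          (Submodule.smul_mem _ _ (Submodule.subset_span (by simp)))
      exact this
    · rw [Submodule.span_le]
      rintro x hx
      rcases hx with rfl | rfl
      · rw [hueq]
        exact Submodule.add_mem _
          (Submodule.smul_mem _ _ (Submodule.subset_span ⟨0, rfl⟩))
          (Submodule.smul_mem _ _ (Submodule.subset_span ⟨1, rfl⟩))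
      · rw [hveq]
        exact Submodule.add_mem _
          (Submodule.smul_mem _ _ (Submodule.subset_span ⟨0, rfl⟩))
          (Submodule.smul_mem _ _ (Submodule.subset_span ⟨1, rfl⟩))
  have hind : LinearIndependent ℝ ![u, v] := by
    rw [LinearIndependent.pair_iff]
    intro a c h
    have h0 := congrFun h ⟨0, hl0⟩
    have h1 := congrFun h ⟨1, hl1⟩
    simp only [Pi.add_apply, Pi.smul_apply, smul_eq_mul, Pi.zero_apply, hu, hv] at h0 h1
    norm_num at h0 h1
    subst h0
    norm_num at h1
    rcases h1 with h1 | h1 | h1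
    · exact ⟨rfl, h1⟩
    · exact absurd h1 hbne
    · exact absurd h1 hsne
  have hrange : ({u, v} : Set (Fin L → ℝ)) = Set.range ![u, v] := by
    ext x
    simp [Matrix.range_cons, Matrix.range_empty]
    tauto
  rw [hspan, hrange, finrank_span_eq_card hind]
  simp
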